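/- The resultant of the polynomials (43 - 8√30)x² + (6 - √30) and x² + (2 + √30/3) in K = ℚ(√30), viewed as polynomials in x over K, is divisible only by primes of K of residue characteristic 2, 3, or 5. -/

import Mathlib

/-- The resultant (given by the determinant of the Sylvester matrix) of
`(43 - 8√30)x² + (6 - √30)` and `x² + (2 + √30/3)` over `K = ℚ(√30)` has norm
whose prime factors (of numerator and denominator) are among 2, 3, 5. -/
theorem stmt_18 (K : Type*) [Field K] [NumberField K] (s : K) (hs : s ^ 2 = 30)
    (hgen : ∀ x : K, ∃ a b : ℚ, x = (a : K) + (b : K) * s) :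
    ∀ p : ℕ, p.Prime →
      ((p : ℤ) ∣ (Algebra.norm ℚ
          (Matrix.det
            !![43 - 8 * s, 0, 6 - s, 0;
               0, 43 - 8 * s, 0, 6 - s;
               1, 0, 2 + s / 3, 0;
               0, 1, 0, 2 + s / 3])).num ∨
        p ∣ (Algebra.norm ℚ
          (Matrix.det
            !![43 - 8 * s, 0, 6 - s, 0;
               0, 43 - 8 * s, 0, 6 - s;
               1, 0, 2 + s / 3, 0;
               0, 1, 0, 2 + s / 3])).den) →
      p = 2 ∨ p = 3 ∨ p = 5 := by
  have hdet : Matrix.det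
            !![43 - 8 * s, 0, 6 - s, 0;
               0, 43 - 8 * s, 0, 6 - s;
               1, 0, 2 + s / 3, 0;
               0, 1, 0, 2 + s / 3] = algebraMap ℚ K (40/3) := by
    simp [Matrix.det_succ_row_zero, Fin.sum_univ_succ, Fin.succAbove]
    field_simp
    ring_nf
    linear_combination (64*s^2 + 32*s - 1916) * hs
  rw [hdet, Algebra.norm_algebraMap]
  set n := Module.finrank ℚ K
  intro p hp hdvd
  have hnum : ((40/3 : ℚ) ^ n).num = 40 ^ n := by
    rw [Rat.num_pow]; norm_num
  have hden : ((40/3 : ℚ) ^ n).den = 3 ^ n := by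
    rw [Rat.den_pow]; norm_num
  rcases hdvd with h | h
  · rw [hnum] at h
    have h40 : (p : ℤ) ∣ 40 := (Nat.prime_iff_prime_int.mp hp).dvd_of_dvd_pow h
    have : p ∣ 40 := by exact_mod_cast h40
    have hle := Nat.le_of_dvd (by norm_num) this
    interval_cases p <;> revert this hp <;> decide
  · rw [hden] at h
    have h3 : p ∣ 3 := hp.dvd_of_dvd_pow h
    have hle := Nat.le_of_dvd (by norm_num) h3
    interval_cases p <;> revert h3 hp <;> decide
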